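/- The function F is non-negative, monotonically non-increasing, and submodular on subsets of P. That is: F(S) ≥ 0 for all S ⊆ P; A ⊆ B ⊆ P implies F(A) ≥ F(B); and for all A ⊆ B ⊆ P and x ∈ P \ B, F(A ∪ {x}) − F(A) ≥ F(B ∪ {x}) − F(B). -/

import Mathlib

open Finset

/-- A single transmission step along a live edge of `H`, avoiding the removed vertex set `S`. -/
def MintStep {α : Type*} (H : Finset (α × α)) (S : Finset α) (x y : α) : Prop :=
  (x, y) ∈ H ∧ x ∉ S ∧ y ∉ S

/-- `u` is reachable from `v` in `H[V \ S]`: there is a directed path (possibly of length 0)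
from `v` to `u` using only edges of `H`, all of whose vertices avoid `S`. -/
def MintReach {α : Type*} (H : Finset (α × α)) (S : Finset α) (v u : α) : Prop :=
  v ∉ S ∧ Relation.ReflTransGen (MintStep H S) v u

/-- The realized MINT objective `f_H(S)`: the number of negative nodes (nodes outside `P`)
reachable from some untreated positive node (a node of `P \ S`) in `H[V \ S]`. -/
noncomputable def mintf {α : Type*} [DecidableEq α] (P : Finset α) (H : Finset (α × α))
    (S : Finset α) : ℕ :=
  Set.ncard {u : α | u ∉ P ∧ ∃ v ∈ P \ S, MintReach H S v u}

/-- The probability of the live-edge realization `H ⊆ E`. -/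
def mintPr {α : Type*} [DecidableEq α] (E : Finset (α × α)) (w : α × α → ℝ)
    (H : Finset (α × α)) : ℝ :=
  (∏ e ∈ H, w e) * ∏ e ∈ E \ H, (1 - w e)

/-- The expected MINT objective `F(S) = Σ_{H ⊆ E} Pr(H) · f_H(S)`. -/
noncomputable def mintF {α : Type*} [DecidableEq α] (E : Finset (α × α)) (w : α × α → ℝ)
    (P : Finset α) (S : Finset α) : ℝ :=
  ∑ H ∈ E.powerset, mintPr E w H * (mintf P H S : ℝ)

set_option linter.unusedSectionVars false

section Aux

variable {α : Type*} [DecidableEq α]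

/-- Plain reachability along edges of `H`, ignoring the removed set. -/
def mintR (H : Finset (α × α)) (v u : α) : Prop :=
  Relation.ReflTransGen (fun a b => (a, b) ∈ H) v u

lemma mintReach_endpoint {H : Finset (α × α)} {S : Finset α} {v b : α}
    (h : Relation.ReflTransGen (MintStep H S) v b) (hv : v ∉ S) : b ∉ S := by
  induction h with
  | refl => exact hv
  | tail _ hbc _ => exact hbc.2.2

lemma mintReach_iff {E H : Finset (α × α)} (hHE : H ⊆ E) {P S : Finset α}
    (hinc : ∀ e ∈ E, e.2 ∉ P) (hSP : S ⊆ P) {v u : α} (hv : v ∉ S) :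
    MintReach H S v u ↔ mintR H v u := by
  constructor
  · rintro ⟨-, h⟩
    exact Relation.ReflTransGen.mono (p := fun a b => (a, b) ∈ H) (fun a b hab => hab.1) _ _ h
  · intro h
    refine ⟨hv, ?_⟩
    induction h with
    | refl => exact .refl
    | tail _ hbc ih =>
      have hcP : _ ∉ P := hinc _ (hHE hbc)
      exact ih.tail ⟨hbc, mintReach_endpoint ih hv, fun hc => hcP (hSP hc)⟩

/-- Coverage set: negative nodes reachable from some node of `T`. -/
def mintU (P : Finset α) (H : Finset (α × α)) (T : Finset α) : Set α :=
  {u | u ∉ P ∧ ∃ v ∈ T, mintR H v u}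

lemma mintf_eq_cov [Fintype α] {E H : Finset (α × α)} (hHE : H ⊆ E) {P S : Finset α}
    (hinc : ∀ e ∈ E, e.2 ∉ P) (hSP : S ⊆ P) :
    mintf P H S = (mintU P H (P \ S)).ncard := by
  unfold mintf mintU
  congr 1
  ext u
  simp only [Set.mem_setOf_eq, and_congr_right_iff]
  intro _
  constructor
  · rintro ⟨v, hvPS, hr⟩
    exact ⟨v, hvPS, (mintReach_iff hHE hinc hSP (Finset.mem_sdiff.1 hvPS).2).1 hr⟩
  · rintro ⟨v, hvPS, hr⟩
    exact ⟨v, hvPS, (mintReach_iff hHE hinc hSP (Finset.mem_sdiff.1 hvPS).2).2 hr⟩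

lemma mintU_mono {P : Finset α} {H : Finset (α × α)} {T T' : Finset α} (h : T ⊆ T') :
    mintU P H T ⊆ mintU P H T' := by
  rintro u ⟨hu, v, hv, hr⟩
  exact ⟨hu, v, h hv, hr⟩

lemma mintU_insert {P : Finset α} {H : Finset (α × α)} {T : Finset α} {x : α} :
    mintU P H (insert x T) = {u | u ∉ P ∧ mintR H x u} ∪ mintU P H T := by
  ext u
  simp only [mintU, Set.mem_setOf_eq, Set.mem_union, Finset.mem_insert]
  constructor
  · rintro ⟨hu, v, (rfl | hv), hr⟩
    · exact Or.inl ⟨hu, hr⟩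
    · exact Or.inr ⟨hu, v, hv, hr⟩
  · rintro (⟨hu, hr⟩ | ⟨hu, v, hv, hr⟩)
    · exact ⟨hu, x, Or.inl rfl, hr⟩
    · exact ⟨hu, v, Or.inr hv, hr⟩

lemma mintU_insert_card [Fintype α] {P : Finset α} {H : Finset (α × α)} {T : Finset α} {x : α} :
    (mintU P H (insert x T)).ncard
      = ({u | u ∉ P ∧ mintR H x u} \ mintU P H T).ncard + (mintU P H T).ncard := by
  rw [mintU_insert, ← Set.diff_union_self,
    Set.ncard_union_eq Set.disjoint_sdiff_left (Set.toFinite _) (Set.toFinite _)]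

lemma sdiff_insert_eq {P A : Finset α} {x : α} (hx : x ∈ P) (hxA : x ∉ A) :
    P \ A = insert x (P \ (A ∪ {x})) := by
  ext u
  simp only [Finset.mem_sdiff, Finset.mem_insert, Finset.mem_union, Finset.mem_singleton]
  by_cases h : u = x
  · subst h; tauto
  · tauto

lemma mintf_submod [Fintype α] {E H : Finset (α × α)} (hHE : H ⊆ E) {P A B : Finset α} {x : α}
    (hinc : ∀ e ∈ E, e.2 ∉ P) (hAB : A ⊆ B) (hBP : B ⊆ P) (hxP : x ∈ P) (hxB : x ∉ B) :
    mintf P H A + mintf P H (B ∪ {x}) ≤ mintf P H (A ∪ {x}) + mintf P H B := by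
  have hAP : A ⊆ P := hAB.trans hBP
  have hAxP : A ∪ {x} ⊆ P := Finset.union_subset hAP (by simpa using hxP)
  have hBxP : B ∪ {x} ⊆ P := Finset.union_subset hBP (by simpa using hxP)
  have hA := mintf_eq_cov hHE hinc hAP
  have hB := mintf_eq_cov hHE hinc hBP
  have hAx := mintf_eq_cov hHE hinc hAxP
  have hBx := mintf_eq_cov hHE hinc hBxP
  rw [hA, hB, hAx, hBx, sdiff_insert_eq hxP (fun h => hxB (hAB h)),
    sdiff_insert_eq hxP hxB, mintU_insert_card, mintU_insert_card]
  have hTT : P \ (B ∪ {x}) ⊆ P \ (A ∪ {x}) :=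
    Finset.sdiff_subset_sdiff (le_refl _) (Finset.union_subset_union hAB (le_refl _))
  have hm : ({u | u ∉ P ∧ mintR H x u} \ mintU P H (P \ (A ∪ {x}))).ncard
      ≤ ({u | u ∉ P ∧ mintR H x u} \ mintU P H (P \ (B ∪ {x}))).ncard :=
    Set.ncard_le_ncard (Set.diff_subset_diff_right (mintU_mono hTT)) (Set.toFinite _)
  omega

lemma mintf_mono [Fintype α] {E H : Finset (α × α)} (hHE : H ⊆ E) {P A B : Finset α}
    (hinc : ∀ e ∈ E, e.2 ∉ P) (hAB : A ⊆ B) (hBP : B ⊆ P) :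
    mintf P H B ≤ mintf P H A := by
  rw [mintf_eq_cov hHE hinc hBP, mintf_eq_cov hHE hinc (hAB.trans hBP)]
  exact Set.ncard_le_ncard (mintU_mono (Finset.sdiff_subset_sdiff (le_refl _) hAB))
    (Set.toFinite _)

lemma mintPr_nonneg {E H : Finset (α × α)} {w : α × α → ℝ}
    (hw : ∀ e ∈ E, 0 ≤ w e ∧ w e ≤ 1) (hHE : H ⊆ E) : 0 ≤ mintPr E w H := by
  apply mul_nonneg
  · exact Finset.prod_nonneg fun e he => (hw e (hHE he)).1
  · exact Finset.prod_nonneg fun e he => by linarith [(hw e (Finset.mem_sdiff.1 he).1).2]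

end Aux

/-- `F` is non-negative, monotonically non-increasing, and submodular on subsets of `P`. -/
theorem stmt0 {α : Type*} [Fintype α] [DecidableEq α]
    (E : Finset (α × α)) (w : α × α → ℝ)
    (hw : ∀ e ∈ E, 0 ≤ w e ∧ w e ≤ 1)
    (P : Finset α) (hinc : ∀ e ∈ E, e.2 ∉ P) :
    (∀ S ⊆ P, 0 ≤ mintF E w P S) ∧
    (∀ A B : Finset α, A ⊆ B → B ⊆ P → mintF E w P B ≤ mintF E w P A) ∧
    (∀ A B : Finset α, ∀ x : α, A ⊆ B → B ⊆ P → x ∈ P → x ∉ B →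
      mintF E w P (B ∪ {x}) - mintF E w P B ≤ mintF E w P (A ∪ {x}) - mintF E w P A) := by
  have hPr : ∀ H ∈ E.powerset, 0 ≤ mintPr E w H := fun H hH =>
    mintPr_nonneg hw (Finset.mem_powerset.1 hH)
  refine ⟨?_, ?_, ?_⟩
  · intro S _
    exact Finset.sum_nonneg fun H hH => mul_nonneg (hPr H hH) (Nat.cast_nonneg _)
  · intro A B hAB hBP
    refine Finset.sum_le_sum fun H hH => ?_
    exact mul_le_mul_of_nonneg_left
      (Nat.cast_le.2 (mintf_mono (Finset.mem_powerset.1 hH) hinc hAB hBP)) (hPr H hH)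
  · intro A B x hAB hBP hxP hxB
    have key : mintF E w P A + mintF E w P (B ∪ {x})
        ≤ mintF E w P (A ∪ {x}) + mintF E w P B := by
      unfold mintF
      rw [← Finset.sum_add_distrib, ← Finset.sum_add_distrib]
      refine Finset.sum_le_sum fun H hH => ?_
      have h := mintf_submod (Finset.mem_powerset.1 hH) hinc hAB hBP hxP hxB
      have h' : ((mintf P H A + mintf P H (B ∪ {x}) : ℕ) : ℝ)
          ≤ ((mintf P H (A ∪ {x}) + mintf P H B : ℕ) : ℝ) := Nat.cast_le.2 h
      push_cast at h'
      nlinarith [hPr H hH, h']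
    linarith
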